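/- For every a > 0 and every λ, z ∈ ℂ, the reproducing kernels satisfy |ρ_{2a,λ}(z)| / ‖ρ_{a,λ}‖² ≤ c · e^{2a·|Im z|}, where c is an absolute constant and ρ_{b,λ}(z) = (1/π)·sin(b(z - conj λ))/(z - conj λ). -/

import Mathlib

open MeasureTheory

/-- The reproducing kernel `ρ_{b,λ}(z) = (1/π)·sin(b(z - conj λ))/(z - conj λ)`. -/
noncomputable def rho (b : ℝ) (l z : ℂ) : ℂ :=
  (1/(Real.pi : ℂ)) * Complex.sin ((b : ℂ) * (z - (starRingEnd ℂ) l)) / (z - (starRingEnd ℂ) l)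

open Set

lemma exp_im_le (w : ℂ) : Real.exp ((w * Complex.I).re) ≤ Real.exp |w.im| := by
  simp only [Complex.mul_re, Complex.I_re, Complex.I_im, mul_zero, mul_one, zero_sub]
  exact Real.exp_le_exp.2 (neg_le_abs _)

lemma exp_im_le' (w : ℂ) : Real.exp ((-w * Complex.I).re) ≤ Real.exp |w.im| := by
  simp only [neg_mul, Complex.neg_re, Complex.mul_re, Complex.I_re, Complex.I_im, mul_zero,
    mul_one, zero_sub, neg_neg]
  exact Real.exp_le_exp.2 (le_abs_self _)

lemma norm_cos_le' (z : ℂ) : ‖Complex.cos z‖ ≤ Real.exp |z.im| := by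
  rw [Complex.cos]
  have h1 := norm_add_le (Complex.exp (z*Complex.I)) (Complex.exp (-z*Complex.I))
  have e1 : ‖Complex.exp (z*Complex.I)‖ = Real.exp ((z*Complex.I).re) := Complex.norm_exp _
  have e2 : ‖Complex.exp (-z*Complex.I)‖ = Real.exp ((-z*Complex.I).re) := Complex.norm_exp _
  have b1 := exp_im_le z
  have b2 := exp_im_le' z
  rw [norm_div]
  have h2 : ‖(2:ℂ)‖ = 2 := by norm_num
  rw [h2]
  rw [e1, e2] at h1
  linarith

lemma norm_sin_le' (z : ℂ) : ‖Complex.sin z‖ ≤ Real.exp |z.im| := by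
  rw [Complex.sin]
  have h1 := norm_sub_le (Complex.exp (-z*Complex.I)) (Complex.exp (z*Complex.I))
  have e1 : ‖Complex.exp (z*Complex.I)‖ = Real.exp ((z*Complex.I).re) := Complex.norm_exp _
  have e2 : ‖Complex.exp (-z*Complex.I)‖ = Real.exp ((-z*Complex.I).re) := Complex.norm_exp _
  have b1 := exp_im_le z
  have b2 := exp_im_le' z
  rw [norm_div, norm_mul, Complex.norm_I, mul_one]
  have h2 : ‖(2:ℂ)‖ = 2 := by norm_num
  rw [h2]
  rw [e1, e2] at h1
  linarith

lemma norm_sin_le_mul' (z : ℂ) : ‖Complex.sin z‖ ≤ ‖z‖ * Real.exp |z.im| := by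
  have hder : ∀ r ∈ Icc (0:ℝ) 1,
      HasDerivWithinAt (fun r : ℝ => Complex.sin ((r:ℝ) * z))
        (Complex.cos ((r:ℝ) * z) * z) (Icc 0 1) r := by
    intro r _
    have h1 : HasDerivAt (fun r : ℝ => ((r:ℝ):ℂ) * z) z r := by
      simpa using (Complex.ofRealCLM.hasDerivAt (x := r)).mul_const z
    have := (Complex.hasDerivAt_sin ((r:ℝ) * z)).comp r h1
    exact this.hasDerivWithinAt
  have hbound : ∀ r ∈ Ico (0:ℝ) 1, ‖Complex.cos ((r:ℝ) * z) * z‖ ≤ Real.exp |z.im| * ‖z‖ := by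
    intro r hr
    rw [norm_mul]
    have h1 : ‖Complex.cos ((r:ℝ) * z)‖ ≤ Real.exp |((r:ℝ) * z).im| := norm_cos_le' _
    have h2 : |((r:ℝ) * z).im| ≤ |z.im| := by
      rw [Complex.mul_im]; simp only [Complex.ofReal_re, Complex.ofReal_im, zero_mul, add_zero]
      rw [abs_mul, abs_of_nonneg hr.1]
      nlinarith [abs_nonneg z.im, hr.1, hr.2.le]
    have := h1.trans (Real.exp_le_exp.2 h2)
    exact mul_le_mul_of_nonneg_right this (norm_nonneg z)
  have := norm_image_sub_le_of_norm_deriv_le_segment' hder hbound 1 (by norm_num : (1:ℝ) ∈ Icc (0:ℝ) 1)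
  simpa [mul_comm] using this

lemma norm_sin_sq' (z : ℂ) :
    ‖Complex.sin z‖^2 = Real.sin z.re ^ 2 + Real.sinh z.im ^ 2 := by
  rw [Complex.sq_norm]
  rw [Complex.sin_eq z, ← Complex.ofReal_sin, ← Complex.ofReal_cos, ← Complex.ofReal_sinh,
    ← Complex.ofReal_cosh]
  simp only [Complex.normSq_apply, Complex.add_re, Complex.add_im, Complex.mul_re, Complex.mul_im,
    Complex.ofReal_re, Complex.ofReal_im, Complex.I_re, Complex.I_im, mul_zero, mul_one,
    zero_mul, sub_zero, add_zero, zero_add, zero_sub, neg_zero]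
  nlinarith [Real.sin_sq_add_cos_sq z.re, Real.cosh_sq z.im]

lemma sinh_nn {y : ℝ} (h : 0 ≤ y) : 0 ≤ Real.sinh y := Real.sinh_nonneg_iff.2 h

lemma sinh_sq_le_mul_exp (y : ℝ) : Real.sinh y ^ 2 ≤ y^2 * Real.exp (2*|y|) := by
  have h2 : Real.sinh |y| ≤ |y| * Real.exp |y| := by
    rw [Real.sinh_eq]
    have e1 : Real.exp (-|y|) = Real.exp |y| * Real.exp (-2*|y|) := by
      rw [← Real.exp_add]; ring_nf
    have e2 : Real.exp (-2*|y|) ≥ 1 - 2*|y| := by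
      nlinarith [Real.add_one_le_exp (-2*|y|)]
    nlinarith [Real.exp_pos |y|, abs_nonneg y]
  have h3 : Real.sinh y ^2 = Real.sinh |y| ^ 2 := by rw [← Real.abs_sinh, sq_abs]
  rw [h3]
  have h4 : Real.exp |y| * Real.exp |y| = Real.exp (2*|y|) := by
    rw [← Real.exp_add]; ring_nf
  nlinarith [sinh_nn (abs_nonneg y), abs_nonneg y, Real.exp_pos |y|, sq_abs y]

lemma sinh_sq_le_exp (y : ℝ) : Real.sinh y ^ 2 ≤ Real.exp (2*|y|) := by
  have h3 : Real.sinh y ^2 = Real.sinh |y| ^ 2 := by rw [← Real.abs_sinh, sq_abs]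
  rw [h3]
  have h1 : Real.sinh |y| ≤ Real.exp |y| := by
    rw [Real.sinh_eq]; nlinarith [Real.exp_pos (-|y|), Real.exp_pos |y|]
  have h4 : Real.exp |y| * Real.exp |y| = Real.exp (2*|y|) := by
    rw [← Real.exp_add]; ring_nf
  nlinarith [sinh_nn (abs_nonneg y), Real.exp_pos |y|]

lemma norm_rho_sq (a : ℝ) (l : ℂ) (x : ℝ) :
    ‖rho a l x‖^2 = (Real.sin (a*(x - l.re))^2 + Real.sinh (a*l.im)^2)
      / (Real.pi^2 * ((x-l.re)^2 + l.im^2)) := by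
  have hure : ((x:ℂ) - (starRingEnd ℂ) l).re = x - l.re := by
    simp [Complex.sub_re, Complex.conj_re]
  have huim : ((x:ℂ) - (starRingEnd ℂ) l).im = l.im := by
    simp [Complex.sub_im, Complex.conj_im]
  have hwre : ((a:ℂ) * ((x:ℂ) - (starRingEnd ℂ) l)).re = a * (x - l.re) := by
    rw [Complex.mul_re, Complex.ofReal_re, Complex.ofReal_im, hure, huim]; ring
  have hwim : ((a:ℂ) * ((x:ℂ) - (starRingEnd ℂ) l)).im = a * l.im := by
    rw [Complex.mul_im, Complex.ofReal_re, Complex.ofReal_im, hure, huim]; ring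
  by_cases hu : (x:ℂ) - (starRingEnd ℂ) l = 0
  · have h1 : x - l.re = 0 := by rw [← hure, hu]; simp
    have h2 : l.im = 0 := by rw [← huim, hu]; simp
    rw [rho, hu]
    simp [h1, h2]
  · have hnu : ‖(x:ℂ) - (starRingEnd ℂ) l‖ ≠ 0 := norm_ne_zero_iff.2 hu
    rw [rho, norm_div, norm_mul]
    have hpi : ‖(1/(Real.pi : ℂ))‖ = 1/Real.pi := by
      rw [norm_div, norm_one, Complex.norm_real, Real.norm_eq_abs,
        abs_of_pos Real.pi_pos]
    rw [hpi]
    have hnsq : ‖(x:ℂ) - (starRingEnd ℂ) l‖^2 = (x - l.re)^2 + l.im^2 := by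
      rw [Complex.sq_norm, Complex.normSq_apply, hure, huim]; ring
    have hs := norm_sin_sq' ((a:ℂ) * ((x:ℂ) - (starRingEnd ℂ) l))
    rw [hwre, hwim] at hs
    rw [div_pow, mul_pow, hs, hnsq]
    rw [div_pow, one_pow]
    field_simp

lemma integral_ge_interval (f : ℝ → ℝ) (hf : Integrable f) (h0 : ∀ x, 0 ≤ f x)
    {c d m : ℝ} (hcd : c ≤ d) (hm : 0 ≤ m) (hge : ∀ x ∈ Icc c d, m ≤ f x) :
    m * (d - c) ≤ ∫ x, f x := by
  have h1 : ∫ x in Icc c d, f x ≤ ∫ x, f x :=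
    setIntegral_le_integral hf (Filter.Eventually.of_forall h0)
  have hconst : IntegrableOn (fun _ : ℝ => m) (Icc c d) := by
    refine integrableOn_const ?_
    rw [Real.volume_Icc]
    exact ENNReal.ofReal_ne_top
  have h2 : ∫ _ in Icc c d, m ≤ ∫ x in Icc c d, f x :=
    setIntegral_mono_on hconst hf.integrableOn measurableSet_Icc hge
  have h3 : ∫ _ in Icc c d, m = m * (d - c) := by
    rw [setIntegral_const, measureReal_def, Real.volume_Icc, ENNReal.toReal_ofReal (by linarith)]
    rw [smul_eq_mul, mul_comm]
  linarith

lemma pure_bound {S H X T M a : ℝ} (hX0 : 0 ≤ X) (hT0 : 0 ≤ T) (hM1 : 1 ≤ M)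
    (hS0 : 0 ≤ S) (hH0 : 0 ≤ H)
    (hs1 : S ≤ 1) (hs2 : S ≤ a^2*X) (hh1 : H ≤ a^2*T*M) (hh2 : H ≤ M) :
    (S+H) / (Real.pi^2 * (X+T)) ≤ (2*(1+M) + 2*a^2*M) * (1+X)⁻¹ := by
  have hc0 : (0:ℝ) < 2*(1+M) + 2*a^2*M := by nlinarith [sq_nonneg a]
  by_cases hXT : X + T = 0
  · rw [hXT, mul_zero, div_zero]
    positivity
  · have hXTpos : 0 < X + T := lt_of_le_of_ne (by linarith) (Ne.symm hXT)
    have key : (S+H) * (1+X) ≤ (2*(1+M) + 2*a^2*M) * (X+T) := by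
      by_cases hX1 : X ≤ 1
      · nlinarith [sq_nonneg a]
      · push_neg at hX1
        nlinarith [sq_nonneg a]
    rw [← div_eq_mul_inv, div_le_div_iff₀ (by positivity) (by positivity)]
    nlinarith [Real.pi_gt_three, hXTpos, hc0, mul_pos hc0 hXTpos,
      mul_nonneg (mul_nonneg hc0.le hXTpos.le) (by nlinarith [Real.pi_gt_three] : (0:ℝ) ≤ Real.pi^2 - 1)]

lemma rho_sq_integrable (a : ℝ) (l : ℂ) : Integrable (fun x : ℝ => ‖rho a l x‖^2) := by
  have hM1 : 1 ≤ Real.exp (2*|a*l.im|) := Real.one_le_exp (by positivity)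
  have hbound : ∀ x : ℝ, ‖rho a l x‖^2 ≤
      (2*(1+Real.exp (2*|a*l.im|)) + 2*a^2*Real.exp (2*|a*l.im|)) * (1 + (x - l.re)^2)⁻¹ := by
    intro x
    rw [norm_rho_sq]
    apply pure_bound (sq_nonneg _) (sq_nonneg _) hM1 (sq_nonneg _) (sq_nonneg _)
    · nlinarith [Real.neg_one_le_sin (a*(x-l.re)), Real.sin_le_one (a*(x-l.re))]
    · have h := Real.abs_sin_le_abs (x := a*(x-l.re))
      nlinarith [abs_nonneg (a*(x-l.re)), sq_abs (a*(x-l.re)),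
        sq_abs (Real.sin (a*(x-l.re))), abs_nonneg (Real.sin (a*(x-l.re)))]
    · have := sinh_sq_le_mul_exp (a*l.im)
      calc Real.sinh (a*l.im)^2 ≤ (a*l.im)^2 * Real.exp (2*|a*l.im|) := this
        _ = a^2 * l.im^2 * Real.exp (2*|a*l.im|) := by ring
    · exact sinh_sq_le_exp (a*l.im)
  have hg : Integrable (fun x : ℝ =>
      (2*(1+Real.exp (2*|a*l.im|)) + 2*a^2*Real.exp (2*|a*l.im|)) * (1 + (x - l.re)^2)⁻¹) :=
    (integrable_inv_one_add_sq.comp_sub_right l.re).const_mul _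
  apply hg.mono'
  · have heq : (fun x : ℝ => ‖rho a l x‖^2) = fun x : ℝ =>
        (Real.sin (a*(x - l.re))^2 + Real.sinh (a*l.im)^2)
          / (Real.pi^2 * ((x-l.re)^2 + l.im^2)) := funext (norm_rho_sq a l)
    rw [heq]
    apply Measurable.aestronglyMeasurable
    apply Measurable.div
    · apply Continuous.measurable
      continuity
    · apply Continuous.measurable
      continuity
  · refine Filter.Eventually.of_forall (fun x => ?_)
    rw [Real.norm_eq_abs, abs_of_nonneg (by positivity)]
    exact hbound x

lemma lower_one {a : ℝ} (l : ℂ) (ha : 0 < a) (ht : a * |l.im| ≤ 1) :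
    a/1024 ≤ ∫ x : ℝ, ‖rho a l x‖^2 := by
  have h0 : ∀ x : ℝ, 0 ≤ ‖rho a l x‖^2 := fun x => by positivity
  have key : ∀ x ∈ Icc (l.re + 1/(2*a)) (l.re + 1/a), a^2/512 ≤ ‖rho a l x‖^2 := by
    intro x hx
    have hx1 : 1/(2*a) ≤ x - l.re := by have := hx.1; linarith
    have hx2 : x - l.re ≤ 1/a := by have := hx.2; linarith
    have hy1 : 1/2 ≤ a * (x - l.re) := by
      have h1 : a * (1/(2*a)) ≤ a * (x - l.re) := by nlinarith
      have h2 : a * (1/(2*a)) = 1/2 := by field_simp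
      linarith
    have hy2 : a * (x - l.re) ≤ 1 := by
      calc a * (x - l.re) ≤ a * (1/a) := by nlinarith
        _ = 1 := by field_simp
    set y := a * (x - l.re) with hy
    have hsin : 1/4 ≤ Real.sin y := by
      have := Real.sin_gt_sub_cube (by linarith : 0 < y)
      have h1 : y^3 ≤ y^2 := by nlinarith
      have h2 : y^2 ≤ y := by nlinarith
      linarith
    have hsin2 : 1/16 ≤ Real.sin y ^2 := by nlinarith
    have hX : a^2 * (x - l.re)^2 ≤ 1 := by nlinarith
    have hT : a^2 * l.im^2 ≤ 1 := by
      nlinarith [mul_nonneg ha.le (abs_nonneg l.im), sq_abs l.im]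
    have hxpos : 0 < x - l.re := by nlinarith
    have hdenpos : 0 < Real.pi^2 * ((x-l.re)^2 + l.im^2) := by
      have h1 : 0 < (x-l.re)^2 + l.im^2 := by nlinarith [sq_nonneg l.im, mul_pos hxpos hxpos]
      positivity
    rw [norm_rho_sq]
    rw [le_div_iff₀ hdenpos]
    have hden : a^2 * (Real.pi^2 * ((x-l.re)^2 + l.im^2)) ≤ 32 := by
      nlinarith [Real.pi_le_four, Real.pi_gt_three, sq_nonneg l.im, sq_nonneg (x-l.re)]
    nlinarith [sq_nonneg (Real.sinh (a*l.im)), sq_nonneg a]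
  have hcd : l.re + 1/(2*a) ≤ l.re + 1/a := by
    have : 1/(2*a) ≤ 1/a := by
      rw [div_le_div_iff₀ (by positivity) (by positivity)]; nlinarith
    linarith
  have := integral_ge_interval _ (rho_sq_integrable a l) h0 hcd (by positivity) key
  have heq : a^2/512 * ((l.re + 1/a) - (l.re + 1/(2*a))) = a/1024 := by
    field_simp
    ring
  linarith [heq ▸ this]

lemma lower_two {a : ℝ} (l : ℂ) (ha : 0 < a) (ht : l.im ≠ 0) :
    Real.sinh (a*|l.im|)^2 / (2*Real.pi^2*|l.im|) ≤ ∫ x : ℝ, ‖rho a l x‖^2 := by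
  have h0 : ∀ x : ℝ, 0 ≤ ‖rho a l x‖^2 := fun x => by positivity
  have htau : 0 < |l.im| := abs_pos.2 ht
  set τ := |l.im| with hτ
  have hm0 : 0 ≤ Real.sinh (a*τ)^2 / (2*Real.pi^2*τ^2) := by positivity
  have key : ∀ x ∈ Icc l.re (l.re + τ),
      Real.sinh (a*τ)^2 / (2*Real.pi^2*τ^2) ≤ ‖rho a l x‖^2 := by
    intro x hx
    have hx1 : 0 ≤ x - l.re := by have := hx.1; linarith
    have hx2 : x - l.re ≤ τ := by have := hx.2; linarith
    have hT : l.im^2 = τ^2 := (sq_abs l.im).symm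
    have hdenpos : 0 < Real.pi^2 * ((x-l.re)^2 + l.im^2) := by
      have h1 : 0 < (x-l.re)^2 + l.im^2 := by nlinarith [sq_nonneg (x-l.re), mul_pos htau htau]
      positivity
    rw [norm_rho_sq, le_div_iff₀ hdenpos]
    have hsinheq : Real.sinh (a*l.im)^2 = Real.sinh (a*τ)^2 := by
      rw [← sq_abs (Real.sinh (a*l.im)), Real.abs_sinh, abs_mul, abs_of_pos ha]
    have hXle : (x-l.re)^2 ≤ τ^2 := by nlinarith
    have hden : Real.pi^2 * ((x-l.re)^2 + l.im^2) ≤ 2*Real.pi^2*τ^2 := by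
      nlinarith [sq_nonneg Real.pi, hXle, hT]
    have hfrac : Real.sinh (a*τ)^2 / (2*Real.pi^2*τ^2) * (Real.pi^2 * ((x-l.re)^2 + l.im^2))
        ≤ Real.sinh (a*τ)^2 / (2*Real.pi^2*τ^2) * (2*Real.pi^2*τ^2) := by
      apply mul_le_mul_of_nonneg_left hden hm0
    have heq2 : Real.sinh (a*τ)^2 / (2*Real.pi^2*τ^2) * (2*Real.pi^2*τ^2) = Real.sinh (a*τ)^2 := by
      field_simp
    rw [heq2] at hfrac
    nlinarith [sq_nonneg (Real.sin (a*(x-l.re)))]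
  have hcd : l.re ≤ l.re + τ := by linarith
  have := integral_ge_interval _ (rho_sq_integrable a l) h0 hcd hm0 key
  have heq : Real.sinh (a*τ)^2 / (2*Real.pi^2*τ^2) * ((l.re + τ) - l.re)
      = Real.sinh (a*τ)^2 / (2*Real.pi^2*τ) := by
    field_simp
    ring
  linarith [heq ▸ this]

lemma helper_sinh_lb {x y F : ℝ} (hx : 0 < x) (hy : 0 < y) (hxy : y * x = 1)
    (hxx : x*x = F) (h3 : 3 ≤ F) : x/3 ≤ (x - y)/2 := by nlinarith

lemma helper_sq_lb {x s F : ℝ} (hx : 0 < x) (h : x/3 ≤ s) (hxx : x*x = F) :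
    F/9 ≤ s^2 := by nlinarith

lemma helper_div_lb {F s2 τ p : ℝ} (hτ : 0 < τ) (hp : 0 < p) (h : F/9 ≤ s2) :
    F/(18*p^2*τ) ≤ s2/(2*p^2*τ) := by
  rw [div_le_div_iff₀ (by positivity) (by positivity)]
  nlinarith [mul_pos hp hp, mul_pos (mul_pos hp hp) hτ]

lemma helper_keyA {p τ : ℝ} (h3 : 3 < p) (h4 : p ≤ 4) (hτ : 0 < τ) :
    2/(p*τ) ≤ 10000/(18*p^2*τ) := by
  rw [div_le_div_iff₀ (by positivity) (by positivity)]
  nlinarith [mul_pos (show (0:ℝ) < p by linarith) hτ]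

lemma helper_keyB {a p τ F : ℝ} (ha : 0 < a) (h3 : 3 < p) (h4 : p ≤ 4) (hτ : 0 < τ)
    (hF : 0 < F) (haF : a*τ ≤ F) : 2*a/p ≤ 10000*F/(18*p^2*τ) := by
  rw [div_le_div_iff₀ (by positivity) (by positivity)]
  have h1 : 36*p^2*(a*τ) ≤ 144*p*(a*τ) := by
    nlinarith [mul_pos (show (0:ℝ) < p by linarith) (mul_pos ha hτ)]
  have h2 : 144*p*(a*τ) ≤ 144*p*F := by nlinarith
  nlinarith

set_option maxHeartbeats 2000000 in
/-- There is an absolute constant `c` such that for every `a > 0` and all `λ, z ∈ ℂ`,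
`|ρ_{2a,λ}(z)| ≤ c·e^{2a|Im z|}·‖ρ_{a,λ}‖²`, where `‖ρ_{a,λ}‖² = ∫_ℝ |ρ_{a,λ}(x)|² dx`. -/
theorem stmt_6 :
    ∃ c : ℝ, 0 < c ∧ ∀ (a : ℝ), 0 < a → ∀ (l z : ℂ),
      ‖rho (2*a) l z‖ ≤ c * Real.exp (2*a*|z.im|) * ∫ x : ℝ, ‖rho a l x‖^2 := by
  refine ⟨10000, by norm_num, ?_⟩
  intro a ha l z
  have hπ : 0 < Real.pi := Real.pi_pos
  have hπ4 : Real.pi ≤ 4 := Real.pi_le_four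
  have hπ3 : 3 < Real.pi := Real.pi_gt_three
  have hI0 : 0 ≤ ∫ x : ℝ, ‖rho a l x‖^2 := integral_nonneg (fun x => by positivity)
  set I : ℝ := ∫ x : ℝ, ‖rho a l x‖^2 with hI
  set β : ℝ := |z.im| with hβ
  set τ : ℝ := |l.im| with hτ
  have hβ0 : 0 ≤ β := abs_nonneg _
  have hτ0 : 0 ≤ τ := abs_nonneg _
  set u : ℂ := z - (starRingEnd ℂ) l with hu
  clear_value I β τ u
  by_cases hu0 : u = 0
  · have hz : rho (2*a) l z = 0 := by
      rw [rho, ← hu, hu0]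
      simp
    rw [hz, norm_zero]
    exact mul_nonneg (by positivity) hI0
  · have hnu : 0 < ‖u‖ := norm_pos_iff.2 hu0
    set w : ℂ := ((2*a : ℝ) : ℂ) * u with hw
    clear_value w
    have hnorm : ‖rho (2*a) l z‖ = (1/Real.pi) * ‖Complex.sin w‖ / ‖u‖ := by
      rw [rho, ← hu, ← hw, norm_div, norm_mul]
      congr 2
      rw [norm_div, norm_one, Complex.norm_real, Real.norm_eq_abs, abs_of_pos hπ]
    have huim : u.im = z.im + l.im := by
      rw [hu]
      simp [Complex.sub_im, Complex.conj_im]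
    have hwim : |w.im| = 2*a*|u.im| := by
      rw [hw, Complex.mul_im, Complex.ofReal_re, Complex.ofReal_im]
      rw [zero_mul, add_zero, abs_mul, abs_of_pos (by linarith : (0:ℝ) < 2*a)]
    have hwn : ‖w‖ = 2*a*‖u‖ := by
      rw [hw, norm_mul, Complex.norm_real, Real.norm_eq_abs,
        abs_of_pos (by linarith : (0:ℝ) < 2*a)]
    have himle : |u.im| ≤ β + τ := by
      rw [huim]
      exact (abs_add_le _ _).trans (by rw [hβ, hτ])
    have himnorm : |u.im| ≤ ‖u‖ := by
      exact Complex.abs_im_le_norm u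
    have hA : ‖rho (2*a) l z‖ ≤ (2*a/Real.pi) * Real.exp (2*a*|u.im|) := by
      have h1 := norm_sin_le_mul' w
      rw [hwim, hwn] at h1
      rw [hnorm, div_le_iff₀ hnu]
      calc (1/Real.pi) * ‖Complex.sin w‖
          ≤ (1/Real.pi) * (2*a*‖u‖ * Real.exp (2*a*|u.im|)) := by
            apply mul_le_mul_of_nonneg_left h1 (by positivity)
        _ = 2*a/Real.pi * Real.exp (2*a*|u.im|) * ‖u‖ := by ring
    have hB : ‖rho (2*a) l z‖ ≤ (1/Real.pi) * Real.exp (2*a*|u.im|) / ‖u‖ := by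
      have h1 := norm_sin_le' w
      rw [hwim] at h1
      rw [hnorm]
      gcongr
    have hEsplit : Real.exp (2*a*(β+τ)) = Real.exp (2*a*β) * Real.exp (2*a*τ) := by
      rw [← Real.exp_add]; ring_nf
    by_cases hcase : a * τ ≤ 1
    · rw [hτ] at hcase
      have hL1 : a/1024 ≤ I := by
        have h := lower_one l ha hcase
        rw [← hI] at h
        exact h
      rw [← hτ] at hcase
      have hexp2 : Real.exp 2 < 7.4 := by
        have h1 : Real.exp 2 = Real.exp 1 * Real.exp 1 := by
          rw [← Real.exp_add]; norm_num
        nlinarith [Real.exp_one_lt_d9, Real.exp_pos 1]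
      calc ‖rho (2*a) l z‖ ≤ (2*a/Real.pi) * Real.exp (2*a*|u.im|) := hA
        _ ≤ (2*a/Real.pi) * Real.exp (2*a*(β+τ)) := by
            gcongr
        _ = (2*a/Real.pi) * (Real.exp (2*a*β) * Real.exp (2*a*τ)) := by rw [hEsplit]
        _ ≤ (2*a/Real.pi) * (Real.exp (2*a*β) * Real.exp 2) := by
            gcongr
            nlinarith
        _ ≤ 10000 * Real.exp (2*a*β) * (a/1024) := by
            have hE : 0 < Real.exp (2*a*β) := Real.exp_pos _
            rw [div_mul_eq_mul_div, div_le_iff₀ hπ]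
            have hfac : 2 * Real.exp 2 * (a * Real.exp (2*a*β)) ≤
                (10000/1024*Real.pi) * (a * Real.exp (2*a*β)) := by
              apply mul_le_mul_of_nonneg_right _ (by positivity)
              nlinarith
            nlinarith [hfac]
        _ ≤ 10000 * Real.exp (2*a*β) * I := by
            gcongr
    · push_neg at hcase
      have hτpos : 0 < τ := by nlinarith
      have htne : l.im ≠ 0 := fun h => by rw [hτ, h, abs_zero] at hτpos; exact lt_irrefl 0 hτpos
      have hL2 := lower_two l ha htne
      rw [← hτ, ← hI] at hL2
      have hsq : Real.exp (a*τ) * Real.exp (a*τ) = Real.exp (2*(a*τ)) := by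
        rw [← Real.exp_add]; ring_nf
      have h3e : (3:ℝ) ≤ Real.exp (2*(a*τ)) := by
        linarith only [Real.add_one_le_exp (2*(a*τ)), hcase]
      have hprod : Real.exp (-(a*τ)) * Real.exp (a*τ) = 1 := by
        rw [← Real.exp_add]; simp
      have hsinh : Real.exp (a*τ)/3 ≤ Real.sinh (a*τ) := by
        rw [Real.sinh_eq]
        exact helper_sinh_lb (Real.exp_pos _) (Real.exp_pos _) hprod hsq h3e
      have hsinh2 : Real.exp (2*(a*τ))/9 ≤ Real.sinh (a*τ)^2 :=
        helper_sq_lb (Real.exp_pos _) hsinh hsq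
      have hL2' : Real.exp (2*(a*τ))/(18*Real.pi^2*τ) ≤ I := by
        have h1 := helper_div_lb (F := Real.exp (2*(a*τ))) hτpos hπ hsinh2
        linarith only [h1, hL2]
      have hE2aτ : Real.exp (2*a*τ) = Real.exp (2*(a*τ)) := by
        congr 1
        ring
      by_cases hcu : τ/2 ≤ ‖u‖
      · calc ‖rho (2*a) l z‖ ≤ (1/Real.pi) * Real.exp (2*a*|u.im|) / ‖u‖ := hB
          _ ≤ (1/Real.pi) * Real.exp (2*a*(β+τ)) / (τ/2) := by
              gcongr
          _ = (2/(Real.pi*τ)) * (Real.exp (2*a*β) * Real.exp (2*(a*τ))) := by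
              rw [hEsplit, hE2aτ]
              field_simp
          _ ≤ (10000/(18*Real.pi^2*τ)) * (Real.exp (2*a*β) * Real.exp (2*(a*τ))) := by
              exact mul_le_mul_of_nonneg_right (helper_keyA hπ3 hπ4 hτpos) (by positivity)
          _ = 10000 * Real.exp (2*a*β) * (Real.exp (2*(a*τ))/(18*Real.pi^2*τ)) := by
              ring
          _ ≤ 10000 * Real.exp (2*a*β) * I := by gcongr
      · push_neg at hcu
        have hβτ : τ/2 ≤ β := by
          have h1 : τ ≤ |u.im| + β := by
            have h2 : l.im = u.im - z.im := by rw [huim]; ring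
            calc τ = |u.im - z.im| := by rw [hτ, ← h2]
              _ = |u.im + -z.im| := by rw [sub_eq_add_neg]
              _ ≤ |u.im| + |-z.im| := abs_add_le _ _
              _ = |u.im| + β := by rw [abs_neg, hβ]
          linarith [himnorm]
        have hax : a*τ ≤ Real.exp (2*(a*τ)) := by
          linarith only [Real.add_one_le_exp (2*(a*τ)), hcase]
        have key := helper_keyB ha hπ3 hπ4 hτpos (Real.exp_pos (2*(a*τ))) hax
        have himτ : 2*a*|u.im| ≤ a*τ := by
          have h1 : |u.im| ≤ τ/2 := by linarith only [himnorm, hcu]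
          have h2 : 2*a*|u.im| ≤ 2*a*(τ/2) :=
            mul_le_mul_of_nonneg_left h1 (by linarith only [ha])
          linarith only [h2]
        have hτβ : a*τ ≤ 2*a*β := by
          have h2 : 2*a*(τ/2) ≤ 2*a*β :=
            mul_le_mul_of_nonneg_left hβτ (by linarith only [ha])
          linarith only [h2]
        calc ‖rho (2*a) l z‖ ≤ (2*a/Real.pi) * Real.exp (2*a*|u.im|) := hA
          _ ≤ (2*a/Real.pi) * Real.exp (a*τ) := by
              apply mul_le_mul_of_nonneg_left (Real.exp_le_exp.2 himτ) (by positivity)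
          _ ≤ (10000*Real.exp (2*(a*τ))/(18*Real.pi^2*τ)) * Real.exp (a*τ) := by
              apply mul_le_mul_of_nonneg_right key (Real.exp_pos _).le
          _ ≤ (10000*Real.exp (2*(a*τ))/(18*Real.pi^2*τ)) * Real.exp (2*a*β) := by
              apply mul_le_mul_of_nonneg_left (Real.exp_le_exp.2 hτβ) (by positivity)
          _ = 10000 * Real.exp (2*a*β) * (Real.exp (2*(a*τ))/(18*Real.pi^2*τ)) := by
              ring
          _ ≤ 10000 * Real.exp (2*a*β) * I := by gcongr
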